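/- Let G, M be symmetric positive semidefinite n×n matrices with dual minimizers c_G, c_M, let k, m ∈ ℝ^n, and set Y = diag(y), Δ = G − M, C_M = (4/n)·I + (1/(λn²))·Y M Y, E_Δ = (1/(λn²))·Y Δ Y, b = (1/(λn²))·Y Δ Y c_M, and γ = ‖C_M^{−1/2} E_Δ C_M^{−1/2}‖_op. For a ∈ ℝ^n define ℰ(a; b) = (1/(2(1−γ)))·( |aᵀ C_M^{−1} b| + √(aᵀ C_M^{−1} a)·√(bᵀ C_M^{−1} b) ) when γ < 1. With ζ = k − m, a_m = (1/(λn))·Y m, a_ζ = (1/(λn))·Y ζ: if γ < 1, then |s_{k,G} − s_{m,M}| ≤ (1/(λn))·|ζᵀ Y c_M| + ℰ(a_m; b) + ℰ(a_ζ; b). -/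

import Mathlib

open Matrix Set

/-- Binary entropy potential, with Lean's convention `Real.log 0 = 0`. -/
noncomputable def phiEnt (c : ℝ) : ℝ := c * Real.log c + (1 - c) * Real.log (1 - c)

/-- The dual objective
`D_K(c) = (1/n)·∑ᵢ φ(cᵢ) + (1/(2λn²))·(y⊙c)ᵀ K (y⊙c)`. -/
noncomputable def dualObj {n : ℕ} (lam : ℝ) (y : Fin n → ℝ)
    (K : Matrix (Fin n) (Fin n) ℝ) (c : Fin n → ℝ) : ℝ :=
  (1 / n) * ∑ i, phiEnt (c i) +
    (1 / (2 * lam * (n : ℝ) ^ 2)) * ((fun i => y i * c i) ⬝ᵥ (K *ᵥ fun i => y i * c i))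

/-- The score `s_{k,G} = (1/(λn))·kᵀ(y⊙c)`. -/
noncomputable def score {n : ℕ} (lam : ℝ) (y k c : Fin n → ℝ) : ℝ :=
  (1 / (lam * n)) * (k ⬝ᵥ fun i => y i * c i)

/-- Operator (spectral) norm of a real square matrix. -/
noncomputable def opNorm {n : ℕ} (A : Matrix (Fin n) (Fin n) ℝ) : ℝ :=
  ‖(Matrix.toEuclideanCLM (𝕜 := ℝ) A :
      EuclideanSpace ℝ (Fin n) →L[ℝ] EuclideanSpace ℝ (Fin n))‖

/-- `ℰ(a; b) = (1/(2(1−γ)))·( |aᵀ C_M⁻¹ b| + √(aᵀ C_M⁻¹ a)·√(bᵀ C_M⁻¹ b) )`. -/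
noncomputable def calE {n : ℕ} (CM : Matrix (Fin n) (Fin n) ℝ) (γ : ℝ)
    (a b : Fin n → ℝ) : ℝ :=
  (1 / (2 * (1 - γ))) * (|a ⬝ᵥ (CM⁻¹ *ᵥ b)| +
    Real.sqrt (a ⬝ᵥ (CM⁻¹ *ᵥ a)) * Real.sqrt (b ⬝ᵥ (CM⁻¹ *ᵥ b)))

lemma psi_convexOn : ConvexOn ℝ (Icc (0:ℝ) 1) (fun c => phiEnt c - 2*c^2) := by
  have hD : Convex ℝ (Icc (0:ℝ) 1) := convex_Icc 0 1
  have hder : ∀ c ∈ Ioo (0:ℝ) 1, HasDerivAt (fun c => phiEnt c - 2*c^2)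
      (Real.log c - Real.log (1-c) - 4*c) c := by
    intro c hc
    have hc0 : c ≠ 0 := ne_of_gt hc.1
    have hc1 : (1:ℝ) - c ≠ 0 := sub_ne_zero.mpr (ne_of_gt hc.2)
    have d1 : HasDerivAt (fun x : ℝ => x * Real.log x) (Real.log c + 1) c :=
      Real.hasDerivAt_mul_log hc0
    have dlin : HasDerivAt (fun x : ℝ => 1 - x) (-1) c := by
      simpa using (hasDerivAt_id c).const_sub 1
    have d2 : HasDerivAt (fun x : ℝ => (1-x) * Real.log (1-x))
        ((Real.log (1-c) + 1) * (-1)) c :=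
      (Real.hasDerivAt_mul_log hc1).comp c dlin
    have d3 : HasDerivAt (fun x : ℝ => 2*x^2) (2*(2*c^1)) c := by
      simpa using (hasDerivAt_pow 2 c).const_mul 2
    have := (d1.add d2).sub d3
    exact this.congr_deriv (by ring)
  have hder' : ∀ c ∈ Ioo (0:ℝ) 1, HasDerivAt (fun c => Real.log c - Real.log (1-c) - 4*c)
      (c⁻¹ + (1-c)⁻¹ - 4) c := by
    intro c hc
    have hc0 : c ≠ 0 := ne_of_gt hc.1
    have hc1 : (1:ℝ) - c ≠ 0 := sub_ne_zero.mpr (ne_of_gt hc.2)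
    have d1 : HasDerivAt Real.log c⁻¹ c := Real.hasDerivAt_log hc0
    have dlin : HasDerivAt (fun x : ℝ => 1 - x) (-1) c := by
      simpa using (hasDerivAt_id c).const_sub 1
    have d2 : HasDerivAt (fun x : ℝ => Real.log (1-x)) ((1-c)⁻¹ * (-1)) c :=
      (Real.hasDerivAt_log hc1).comp c dlin
    have d3 : HasDerivAt (fun x : ℝ => 4*x) 4 c := by
      simpa using (hasDerivAt_id c).const_mul 4
    have := (d1.sub d2).sub d3
    exact this.congr_deriv (by ring)
  have hev : ∀ c ∈ Ioo (0:ℝ) 1, (deriv fun c => phiEnt c - 2*c^2) =ᶠ[nhds c]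
      (fun c => Real.log c - Real.log (1-c) - 4*c) := by
    intro c hc
    filter_upwards [isOpen_Ioo.mem_nhds hc] with x hx using (hder x hx).deriv
  apply convexOn_of_deriv2_nonneg hD
  · have h1 : Continuous fun c : ℝ => c * Real.log c := Real.continuous_mul_log
    have h2 : Continuous fun c : ℝ => (1-c) * Real.log (1-c) :=
      h1.comp (continuous_const.sub continuous_id)
    exact ((h1.add h2).sub (by continuity)).continuousOn
  · rw [interior_Icc]
    intro c hc
    exact (hder c hc).differentiableAt.differentiableWithinAt
  · rw [interior_Icc]
    intro c hc
    exact (((hder' c hc).differentiableAt.congr_of_eventuallyEq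
      (hev c hc))).differentiableWithinAt
  · rw [interior_Icc]
    intro c hc
    have h2 : deriv^[2] (fun c => phiEnt c - 2*c^2) c = c⁻¹ + (1-c)⁻¹ - 4 := by
      simp only [Function.iterate_succ, Function.iterate_zero, Function.comp_apply, id_eq]
      rw [Filter.EventuallyEq.deriv_eq (hev c hc)]
      exact (hder' c hc).deriv
    rw [h2]
    obtain ⟨h0, h1⟩ := hc
    have hc2 : (0:ℝ) < 1 - c := by linarith
    have : (4:ℝ) ≤ c⁻¹ + (1-c)⁻¹ := by
      rw [inv_eq_one_div, inv_eq_one_div, div_add_div _ _ (ne_of_gt h0) (ne_of_gt hc2),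
        le_div_iff₀ (mul_pos h0 hc2)]
      nlinarith [sq_nonneg (2*c-1)]
    linarith

lemma dot_self_nonneg {n : ℕ} (u : Fin n → ℝ) : 0 ≤ u ⬝ᵥ u :=
  Finset.sum_nonneg fun i _ => mul_self_nonneg _

lemma dot_shift {n : ℕ} {S : Matrix (Fin n) (Fin n) ℝ} (hS : Sᵀ = S) (u z : Fin n → ℝ) :
    (S *ᵥ u) ⬝ᵥ z = u ⬝ᵥ (S *ᵥ z) := by
  rw [dotProduct_comm, dotProduct_mulVec, ← mulVec_transpose, hS, dotProduct_comm]

lemma sumPsi_convexOn (n : ℕ) (coef : ℝ) (hcoef : 0 ≤ coef) :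
    ConvexOn ℝ {c : Fin n → ℝ | ∀ i, c i ∈ Icc (0:ℝ) 1}
      (fun c => coef * ∑ i, (phiEnt (c i) - 2*(c i)^2)) := by
  constructor
  · intro x hx y hy a b ha hb hab i
    exact (convex_Icc (0:ℝ) 1) (hx i) (hy i) ha hb hab
  · intro x hx y hy a b ha hb hab
    simp only [smul_eq_mul]
    have hle : ∀ i : Fin n, phiEnt ((a • x + b • y) i) - 2*((a • x + b • y) i)^2 ≤
        a * (phiEnt (x i) - 2*(x i)^2) + b * (phiEnt (y i) - 2*(y i)^2) := by
      intro i
      have := psi_convexOn.2 (hx i) (hy i) ha hb hab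
      simpa [Pi.add_apply, Pi.smul_apply, smul_eq_mul] using this
    calc coef * ∑ i, (phiEnt ((a • x + b • y) i) - 2*((a • x + b • y) i)^2)
        ≤ coef * ∑ i, (a * (phiEnt (x i) - 2*(x i)^2) + b * (phiEnt (y i) - 2*(y i)^2)) := by
          apply mul_le_mul_of_nonneg_left _ hcoef
          exact Finset.sum_le_sum fun i _ => hle i
      _ = a * (coef * ∑ i, (phiEnt (x i) - 2*(x i)^2))
          + b * (coef * ∑ i, (phiEnt (y i) - 2*(y i)^2)) := by
          rw [Finset.sum_add_distrib, ← Finset.mul_sum, ← Finset.mul_sum]; ring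

lemma quad_growth {n : ℕ} {s : Set (Fin n → ℝ)}
    {g : (Fin n → ℝ) → ℝ} (hg : ConvexOn ℝ s g)
    {A : Matrix (Fin n) (Fin n) ℝ} (hA : Aᵀ = A)
    {z : Fin n → ℝ} (hz : z ∈ s)
    (hmin : IsMinOn (fun c => g c + (1/2) * (c ⬝ᵥ (A *ᵥ c))) s z)
    {x : Fin n → ℝ} (hx : x ∈ s) :
    g z + (1/2) * (z ⬝ᵥ (A *ᵥ z)) + (1/2) * ((x - z) ⬝ᵥ (A *ᵥ (x - z)))
      ≤ g x + (1/2) * (x ⬝ᵥ (A *ᵥ x)) := by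
  set d : Fin n → ℝ := x - z with hd
  have hcross : ∀ v w : Fin n → ℝ, v ⬝ᵥ (A *ᵥ w) = w ⬝ᵥ (A *ᵥ v) := by
    intro v w
    calc v ⬝ᵥ (A *ᵥ w) = (v ᵥ* A) ⬝ᵥ w := dotProduct_mulVec v A w
      _ = (Aᵀ *ᵥ v) ⬝ᵥ w := by rw [mulVec_transpose]
      _ = (A *ᵥ v) ⬝ᵥ w := by rw [hA]
      _ = w ⬝ᵥ (A *ᵥ v) := dotProduct_comm _ _
  have hq : ∀ t : ℝ, 0 ≤ t → t ≤ 1 →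
      0 ≤ t * ((g x - g z) + z ⬝ᵥ (A *ᵥ d)) + t^2 * ((1/2) * (d ⬝ᵥ (A *ᵥ d))) := by
    intro t ht0 ht1
    have hmem : (1 - t) • z + t • x ∈ s := hg.1 hz hx (by linarith) ht0 (by ring)
    have h1 := isMinOn_iff.mp hmin _ hmem
    have h2 := hg.2 hz hx (by linarith : (0:ℝ) ≤ 1 - t) ht0 (by ring)
    have hpt : (1 - t) • z + t • x = z + t • d := by
      rw [hd]; funext i
      simp [Pi.add_apply, Pi.smul_apply, Pi.sub_apply, smul_eq_mul]
      ring
    have hquad : (z + t • d) ⬝ᵥ (A *ᵥ (z + t • d)) =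
        z ⬝ᵥ (A *ᵥ z) + 2 * t * (z ⬝ᵥ (A *ᵥ d)) + t^2 * (d ⬝ᵥ (A *ᵥ d)) := by
      rw [mulVec_add, dotProduct_add, add_dotProduct, add_dotProduct, mulVec_smul]
      rw [dotProduct_smul, smul_dotProduct, smul_dotProduct, dotProduct_smul]
      rw [hcross d z]
      simp only [smul_eq_mul]
      ring
    rw [hpt] at h1 h2
    simp only [smul_eq_mul] at h2
    rw [hquad] at h1
    nlinarith [h1, h2]
  have hkey : 0 ≤ (g x - g z) + z ⬝ᵥ (A *ᵥ d) := by
    by_contra hcon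
    push_neg at hcon
    set K := (g x - g z) + z ⬝ᵥ (A *ᵥ d) with hK
    set Q := (1/2) * (d ⬝ᵥ (A *ᵥ d)) with hQ
    set t := min 1 (-K / (|Q| + 1)) with ht
    have habs : (0:ℝ) < |Q| + 1 := by positivity
    have ht0 : 0 < t := lt_min one_pos (div_pos (neg_pos.mpr hcon) habs)
    have ht1 : t ≤ 1 := min_le_left _ _
    have htle : t * (|Q| + 1) ≤ -K := by
      have h5 : t ≤ -K/(|Q|+1) := min_le_right _ _
      rw [le_div_iff₀ habs] at h5
      linarith
    have hQb : t^2 * Q ≤ t * (t * (|Q| + 1)) - t^2 := by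
      have h6 : t^2 * Q ≤ t^2 * |Q| := by
        nlinarith [le_abs_self Q, sq_nonneg t]
      nlinarith [sq_nonneg t]
    have h7 := hq t ht0.le ht1
    nlinarith [mul_le_mul_of_nonneg_left htle ht0.le, sq_nonneg t, ht0]
  have hfinal : x ⬝ᵥ (A *ᵥ x) = z ⬝ᵥ (A *ᵥ z) + 2*(z ⬝ᵥ (A *ᵥ d)) + d ⬝ᵥ (A *ᵥ d) := by
    have hx' : x = z + d := by rw [hd]; funext i; simp
    nth_rewrite 1 [hx']; nth_rewrite 1 [hx']
    rw [mulVec_add, dotProduct_add, add_dotProduct, add_dotProduct]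
    rw [hcross d z]
    ring
  linarith [hkey]

lemma abs_dot_le_opNorm {n : ℕ} (A : Matrix (Fin n) (Fin n) ℝ) (u : Fin n → ℝ) :
    |u ⬝ᵥ (A *ᵥ u)| ≤ opNorm A * (u ⬝ᵥ u) := by
  set x : EuclideanSpace ℝ (Fin n) := (WithLp.equiv 2 _).symm u with hx
  set L := (Matrix.toEuclideanCLM (𝕜 := ℝ) A :
      EuclideanSpace ℝ (Fin n) →L[ℝ] EuclideanSpace ℝ (Fin n)) with hL
  have hAx : L x = (WithLp.equiv 2 _).symm (A *ᵥ u) := by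
    rw [hL, hx]
    simp [Matrix.toLin'_apply]
  have hinner : (inner ℝ x (L x) : ℝ) = u ⬝ᵥ (A *ᵥ u) := by
    rw [hAx, hx]
    simp [PiLp.inner_apply, dotProduct, mul_comm]
  have hxx : ‖x‖ * ‖x‖ = u ⬝ᵥ u := by
    rw [← real_inner_self_eq_norm_mul_norm, hx]
    simp [PiLp.inner_apply, dotProduct, mul_comm]
    rw [EuclideanSpace.real_norm_sq_eq]
    simp [sq]
  have h1 : |(inner ℝ x (L x) : ℝ)| ≤ ‖x‖ * ‖L x‖ := abs_real_inner_le_norm _ _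
  have h2 : ‖L x‖ ≤ ‖L‖ * ‖x‖ := L.le_opNorm x
  have h3 : |u ⬝ᵥ (A *ᵥ u)| ≤ ‖L‖ * (‖x‖ * ‖x‖) := by
    rw [← hinner]
    calc |(inner ℝ x (L x) : ℝ)| ≤ ‖x‖ * ‖L x‖ := h1
      _ ≤ ‖x‖ * (‖L‖ * ‖x‖) := by
          exact mul_le_mul_of_nonneg_left h2 (norm_nonneg x)
      _ = ‖L‖ * (‖x‖ * ‖x‖) := by ring
  rw [opNorm, ← hL, ← hxx]
  exact h3

lemma ball_bound {n : ℕ} {γ : ℝ} (hγ : γ < 1) (u α β : Fin n → ℝ)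
    (h : (1 - γ) * (u ⬝ᵥ u) + β ⬝ᵥ u ≤ 0) :
    |α ⬝ᵥ u| ≤ (1 / (2 * (1 - γ))) * (|α ⬝ᵥ β| + Real.sqrt (α ⬝ᵥ α) * Real.sqrt (β ⬝ᵥ β)) := by
  set δ : ℝ := 1 - γ with hδdef
  have hδ : 0 < δ := by rw [hδdef]; linarith
  set w : Fin n → ℝ := u + (1/(2*δ)) • β with hw
  have hexp : w ⬝ᵥ w = u ⬝ᵥ u + (1/δ) * (β ⬝ᵥ u) + (1/(2*δ))^2 * (β ⬝ᵥ β) := by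
    rw [hw, dotProduct_add, add_dotProduct, add_dotProduct, dotProduct_smul,
      smul_dotProduct, smul_dotProduct, dotProduct_smul]
    rw [dotProduct_comm u β]
    simp only [smul_eq_mul]
    field_simp
    ring
  have hww : w ⬝ᵥ w ≤ (β ⬝ᵥ β) / (4*δ^2) := by
    rw [le_div_iff₀ (by positivity)]
    have h9 : δ * (u ⬝ᵥ u) + β ⬝ᵥ u ≤ 0 := h
    have heq : w ⬝ᵥ w * (4*δ^2) = (4*δ)*(δ*(u ⬝ᵥ u) + β ⬝ᵥ u) + β ⬝ᵥ β := by
      rw [hexp]; field_simp; ring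
    have h10 : (4*δ)*(δ*(u ⬝ᵥ u) + β ⬝ᵥ u) ≤ 0 :=
      mul_nonpos_of_nonneg_of_nonpos (by positivity) h9
    linarith
  have hCS : |α ⬝ᵥ w| ≤ Real.sqrt (α ⬝ᵥ α) * Real.sqrt (w ⬝ᵥ w) := by
    have h1 : (α ⬝ᵥ w)^2 ≤ (α ⬝ᵥ α)*(w ⬝ᵥ w) := by
      have := Finset.sum_mul_sq_le_sq_mul_sq Finset.univ α w
      simpa [dotProduct, sq] using this
    calc |α ⬝ᵥ w| = Real.sqrt ((α ⬝ᵥ w)^2) := (Real.sqrt_sq_eq_abs _).symm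
      _ ≤ Real.sqrt ((α ⬝ᵥ α)*(w ⬝ᵥ w)) := Real.sqrt_le_sqrt h1
      _ = Real.sqrt (α ⬝ᵥ α) * Real.sqrt (w ⬝ᵥ w) := Real.sqrt_mul (dot_self_nonneg α) _
  have hw2 : Real.sqrt (w ⬝ᵥ w) ≤ Real.sqrt (β ⬝ᵥ β) / (2*δ) := by
    have h11 := Real.sqrt_le_sqrt hww
    rwa [show (β ⬝ᵥ β) / (4*δ^2) = (β ⬝ᵥ β) / ((2*δ)^2) by ring,
      Real.sqrt_div (dot_self_nonneg β), Real.sqrt_sq (by positivity : (0:ℝ) ≤ 2*δ)] at h11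
  have hdecomp : α ⬝ᵥ u = α ⬝ᵥ w - (1/(2*δ)) * (α ⬝ᵥ β) := by
    rw [hw, dotProduct_add, dotProduct_smul, smul_eq_mul]; ring
  have habs : |α ⬝ᵥ u| ≤ |α ⬝ᵥ w| + (1/(2*δ)) * |α ⬝ᵥ β| := by
    rw [hdecomp]
    calc |α ⬝ᵥ w - (1/(2*δ)) * (α ⬝ᵥ β)| ≤ |α ⬝ᵥ w| + |(1/(2*δ)) * (α ⬝ᵥ β)| :=
        abs_sub _ _
      _ = |α ⬝ᵥ w| + (1/(2*δ)) * |α ⬝ᵥ β| := by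
        rw [abs_mul, abs_of_pos (by positivity : (0:ℝ) < 1/(2*δ))]
  have hfin : |α ⬝ᵥ w| ≤ Real.sqrt (α ⬝ᵥ α) * Real.sqrt (β ⬝ᵥ β) / (2*δ) := by
    calc |α ⬝ᵥ w| ≤ Real.sqrt (α ⬝ᵥ α) * Real.sqrt (w ⬝ᵥ w) := hCS
      _ ≤ Real.sqrt (α ⬝ᵥ α) * (Real.sqrt (β ⬝ᵥ β) / (2*δ)) :=
        mul_le_mul_of_nonneg_left hw2 (Real.sqrt_nonneg _)
      _ = Real.sqrt (α ⬝ᵥ α) * Real.sqrt (β ⬝ᵥ β) / (2*δ) := by ring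
  have : |α ⬝ᵥ u| ≤ Real.sqrt (α ⬝ᵥ α) * Real.sqrt (β ⬝ᵥ β) / (2*δ) + (1/(2*δ)) * |α ⬝ᵥ β| := by
    linarith
  calc |α ⬝ᵥ u| ≤ Real.sqrt (α ⬝ᵥ α) * Real.sqrt (β ⬝ᵥ β) / (2*δ) + (1/(2*δ)) * |α ⬝ᵥ β| := this
    _ = (1 / (2 * δ)) * (|α ⬝ᵥ β| + Real.sqrt (α ⬝ᵥ α) * Real.sqrt (β ⬝ᵥ β)) := by ring

/-- Curvature–spectral perturbation bound for the dual scores: when the relative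
curvature size `γ = ‖C_M^{−1/2} E_Δ C_M^{−1/2}‖_op` is below 1,
`|s_{k,G} − s_{m,M}| ≤ (1/(λn))·|ζᵀ Y c_M| + ℰ(a_m; b) + ℰ(a_ζ; b)`. -/
theorem curvature_spectral_perturbation
    {n : ℕ} (hn : 0 < n)
    (y : Fin n → ℝ) (hy : ∀ i, y i = 1 ∨ y i = -1)
    (lam : ℝ) (hlam : 0 < lam)
    (G M : Matrix (Fin n) (Fin n) ℝ) (hG : G.PosSemidef) (hM : M.PosSemidef)
    (cG cM : Fin n → ℝ)
    (hcG : (∀ i, cG i ∈ Icc (0:ℝ) 1) ∧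
      IsMinOn (dualObj lam y G) {c | ∀ i, c i ∈ Icc (0:ℝ) 1} cG)
    (hcM : (∀ i, cM i ∈ Icc (0:ℝ) 1) ∧
      IsMinOn (dualObj lam y M) {c | ∀ i, c i ∈ Icc (0:ℝ) 1} cM)
    (k m : Fin n → ℝ)
    (Y : Matrix (Fin n) (Fin n) ℝ) (hYdef : Y = Matrix.diagonal y)
    (Δ : Matrix (Fin n) (Fin n) ℝ) (hΔdef : Δ = G - M)
    (CM : Matrix (Fin n) (Fin n) ℝ)
    (hCMdef : CM = ((4 : ℝ) / n) • (1 : Matrix (Fin n) (Fin n) ℝ) +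
      (1 / (lam * (n : ℝ) ^ 2)) • (Y * M * Y))
    (EΔ : Matrix (Fin n) (Fin n) ℝ)
    (hEΔdef : EΔ = (1 / (lam * (n : ℝ) ^ 2)) • (Y * Δ * Y))
    (b : Fin n → ℝ) (hbdef : b = EΔ *ᵥ cM)
    -- `S = C_M^{−1/2}` is the (unique) positive semidefinite inverse square root of `C_M`
    (S : Matrix (Fin n) (Fin n) ℝ) (hS : S.PosSemidef) (hSsq : S * S = CM⁻¹)
    (γ : ℝ) (hγdef : γ = opNorm (S * EΔ * S))
    (ζ am aζ : Fin n → ℝ)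
    (hζdef : ζ = k - m)
    (hamdef : am = (1 / (lam * n)) • (Y *ᵥ m))
    (haζdef : aζ = (1 / (lam * n)) • (Y *ᵥ ζ))
    (hγ : γ < 1) :
    |score lam y k cG - score lam y m cM| ≤
      (1 / (lam * n)) * |ζ ⬝ᵥ (Y *ᵥ cM)| + calE CM γ am b + calE CM γ aζ b := by

  obtain ⟨hcGbox, hcGmin⟩ := hcG
  obtain ⟨hcMbox, hcMmin⟩ := hcM
  have hn' : (0:ℝ) < n := Nat.cast_pos.mpr hn
  -- symmetry facts
  have hYsym : Yᵀ = Y := by rw [hYdef, diagonal_transpose]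
  have hYH : Yᴴ = Y := by
    rw [conjTranspose_eq_transpose_of_trivial, hYsym]
  have hMsym : Mᵀ = M := by
    rw [← conjTranspose_eq_transpose_of_trivial]; exact hM.1
  have hGsym : Gᵀ = G := by
    rw [← conjTranspose_eq_transpose_of_trivial]; exact hG.1
  have hΔsym : Δᵀ = Δ := by rw [hΔdef, transpose_sub, hGsym, hMsym]
  have hEsym : EΔᵀ = EΔ := by
    rw [hEΔdef, transpose_smul, transpose_mul, transpose_mul, hYsym, hΔsym, Matrix.mul_assoc]
  have hCMsym : CMᵀ = CM := by
    rw [hCMdef, transpose_add, transpose_smul, transpose_one, transpose_smul,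
      transpose_mul, transpose_mul, hYsym, hMsym, Matrix.mul_assoc]
  have hSsym : Sᵀ = S := by
    rw [← conjTranspose_eq_transpose_of_trivial]; exact hS.1
  -- CM is positive definite
  have hYMY : (Y * M * Y).PosSemidef := by
    have := hM.conjTranspose_mul_mul_same Y
    rwa [hYH] at this
  have hCMpd : CM.PosDef := by
    rw [hCMdef]
    apply Matrix.PosDef.add_posSemidef
    · rw [smul_one_eq_diagonal]
      exact posDef_diagonal_iff.mpr (fun i => by positivity)
    · constructor
      · have h1 := hYMY.1
        rw [Matrix.IsHermitian, conjTranspose_smul, h1.eq]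
        congr 1
      · intro x
        exact (hYMY.smul (by positivity : (0:ℝ) ≤ 1 / (lam * (n:ℝ)^2))).2 x
  have hdetCM : IsUnit CM.det := isUnit_iff_ne_zero.mpr (ne_of_gt hCMpd.det_pos)
  have hinvCM : CM⁻¹ * CM = 1 := nonsing_inv_mul CM hdetCM
  have hSdet : IsUnit S.det := by
    have h1 : S.det * S.det = (CM⁻¹).det := by rw [← det_mul, hSsq]
    have h2 : (CM⁻¹).det ≠ 0 := by
      rw [det_nonsing_inv, Ring.inverse_eq_inv]
      exact inv_ne_zero (ne_of_gt hCMpd.det_pos)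
    refine isUnit_iff_ne_zero.mpr (fun h0 => h2 ?_)
    rw [← h1, h0, zero_mul]
  have hSCS : S * CM * S = 1 := by
    have h1 : S * (S * CM) = 1 := by rw [← Matrix.mul_assoc, hSsq, hinvCM]
    have h2 : (S * CM) * S = 1 := mul_eq_one_comm.mp h1
    rw [Matrix.mul_assoc] at h2 ⊢
    exact h2
  -- d and u
  set d : Fin n → ℝ := cG - cM with hd
  have hSinv : S * S⁻¹ = 1 := mul_nonsing_inv S hSdet
  obtain ⟨u, hdu⟩ : ∃ u, S *ᵥ u = d :=
    ⟨S⁻¹ *ᵥ d, by rw [mulVec_mulVec, hSinv, one_mulVec]⟩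
  have hcGd : cG = cM + d := by rw [hd]; funext i; simp
  -- dual objective representation
  set g : (Fin n → ℝ) → ℝ := fun c => (1/(n:ℝ)) * ∑ i, (phiEnt (c i) - 2*(c i)^2) with hg
  set box : Set (Fin n → ℝ) := {c : Fin n → ℝ | ∀ i, c i ∈ Icc (0:ℝ) 1} with hbox
  have hgconv : ConvexOn ℝ box g := sumPsi_convexOn n (1/(n:ℝ)) (by positivity)
  have hyc : ∀ c : Fin n → ℝ, (fun i => y i * c i) = Y *ᵥ c := by
    intro c; funext i; rw [hYdef, mulVec_diagonal]
  have hrep : ∀ (K A : Matrix (Fin n) (Fin n) ℝ),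
      A = ((4:ℝ)/n) • (1 : Matrix (Fin n) (Fin n) ℝ) + (1/(lam*(n:ℝ)^2)) • (Y*K*Y) →
      dualObj lam y K = fun c => g c + (1/2) * (c ⬝ᵥ (A *ᵥ c)) := by
    intro K A hA
    funext c
    rw [dualObj, hyc c, hA]
    rw [add_mulVec, dotProduct_add, Matrix.smul_mulVec, dotProduct_smul, one_mulVec,
      Matrix.smul_mulVec, dotProduct_smul]
    have hconj : c ⬝ᵥ ((Y*K*Y) *ᵥ c) = (Y *ᵥ c) ⬝ᵥ (K *ᵥ (Y *ᵥ c)) := by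
      rw [Matrix.mul_assoc, ← mulVec_mulVec, ← mulVec_mulVec]
      exact (dot_shift hYsym c (K *ᵥ (Y *ᵥ c))).symm
    rw [hconj]
    have hcc : c ⬝ᵥ c = ∑ i, (c i)^2 := by simp [dotProduct, sq]
    rw [hg]
    simp only [smul_eq_mul]
    rw [hcc, Finset.sum_sub_distrib, ← Finset.mul_sum]
    ring
  -- quadratic growth at both minimizers
  have hAG : CM + EΔ = ((4:ℝ)/n) • (1 : Matrix (Fin n) (Fin n) ℝ)
      + (1/(lam*(n:ℝ)^2)) • (Y*G*Y) := by
    rw [hCMdef, hEΔdef, hΔdef]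
    rw [Matrix.mul_sub, Matrix.sub_mul, smul_sub]
    abel
  have repM := hrep M CM hCMdef
  have repG := hrep G (CM + EΔ) hAG
  have hmin_M : IsMinOn (fun c => g c + (1/2)*(c ⬝ᵥ (CM *ᵥ c))) box cM := by
    rw [← repM]; exact hcMmin
  have hmin_G : IsMinOn (fun c => g c + (1/2)*(c ⬝ᵥ ((CM + EΔ) *ᵥ c))) box cG := by
    rw [← repG]; exact hcGmin
  have hCEsym : (CM + EΔ)ᵀ = CM + EΔ := by rw [transpose_add, hCMsym, hEsym]
  have qgM := quad_growth hgconv hCMsym hcMbox hmin_M hcGbox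
  have qgG := quad_growth hgconv hCEsym hcGbox hmin_G hcMbox
  -- rewrite qgG's difference
  have hdd' : ∀ B : Matrix (Fin n) (Fin n) ℝ,
      (cM - cG) ⬝ᵥ (B *ᵥ (cM - cG)) = d ⬝ᵥ (B *ᵥ d) := by
    intro B
    have : cM - cG = -d := by rw [hd]; funext i; simp
    rw [this, mulVec_neg, dotProduct_neg, neg_dotProduct, neg_neg]
  rw [hdd'] at qgG
  have hcGsub : cG - cM = d := by rw [hd]
  rw [hcGsub] at qgM
  -- key inequality
  have e1 : ∀ c : Fin n → ℝ, c ⬝ᵥ ((CM+EΔ) *ᵥ c) = c ⬝ᵥ (CM *ᵥ c) + c ⬝ᵥ (EΔ *ᵥ c) := by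
    intro c; rw [add_mulVec, dotProduct_add]
  have e2 : cG ⬝ᵥ (EΔ *ᵥ cG) = cM ⬝ᵥ (EΔ *ᵥ cM) + 2*(cM ⬝ᵥ (EΔ *ᵥ d)) + d ⬝ᵥ (EΔ *ᵥ d) := by
    rw [hcGd, mulVec_add, dotProduct_add, add_dotProduct, add_dotProduct]
    have : d ⬝ᵥ (EΔ *ᵥ cM) = cM ⬝ᵥ (EΔ *ᵥ d) := by
      rw [← dot_shift hEsym cM d, dotProduct_comm]
    rw [this]; ring
  have e2' : cG ⬝ᵥ (CM *ᵥ cG) = cM ⬝ᵥ (CM *ᵥ cM) + 2*(cM ⬝ᵥ (CM *ᵥ d)) + d ⬝ᵥ (CM *ᵥ d) := by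
    rw [hcGd, mulVec_add, dotProduct_add, add_dotProduct, add_dotProduct]
    have : d ⬝ᵥ (CM *ᵥ cM) = cM ⬝ᵥ (CM *ᵥ d) := by
      rw [← dot_shift hCMsym cM d, dotProduct_comm]
    rw [this]; ring
  have e3 : b ⬝ᵥ d = cM ⬝ᵥ (EΔ *ᵥ d) := by
    rw [hbdef]; rw [dot_shift hEsym cM d]
  have hkey1 : d ⬝ᵥ (CM *ᵥ d) + d ⬝ᵥ (EΔ *ᵥ d) + b ⬝ᵥ d ≤ 0 := by
    have q1 := qgM
    have q2 := qgG
    rw [e1 cG, e1 cM, e1 d] at q2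
    rw [e2'] at q1
    rw [e2, e2'] at q2
    rw [e3]
    linarith
  -- translate to whitened coordinates
  have hid1 : d ⬝ᵥ (CM *ᵥ d) = u ⬝ᵥ u := by
    rw [← hdu, mulVec_mulVec, dot_shift hSsym u ((CM*S) *ᵥ u), mulVec_mulVec,
      ← Matrix.mul_assoc, hSCS, one_mulVec]
  have hid2 : d ⬝ᵥ (EΔ *ᵥ d) = u ⬝ᵥ ((S*EΔ*S) *ᵥ u) := by
    rw [← hdu, mulVec_mulVec, dot_shift hSsym u ((EΔ*S) *ᵥ u), mulVec_mulVec,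
      ← Matrix.mul_assoc]
  set βv : Fin n → ℝ := S *ᵥ b with hβv
  have hid3 : b ⬝ᵥ d = βv ⬝ᵥ u := by
    rw [← hdu, hβv, dot_shift hSsym b u]
  -- spectral bound and ball constraint
  have hball_pre : (1-γ) * (u ⬝ᵥ u) + βv ⬝ᵥ u ≤ 0 := by
    have hs := abs_dot_le_opNorm (S*EΔ*S) u
    rw [← hγdef] at hs
    have h1 : -(γ * (u ⬝ᵥ u)) ≤ u ⬝ᵥ ((S*EΔ*S) *ᵥ u) := by
      have := neg_abs_le (u ⬝ᵥ ((S*EΔ*S) *ᵥ u))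
      linarith
    rw [hid1, hid2, hid3] at hkey1
    nlinarith [h1, hkey1]
  -- core bound for arbitrary a
  have hcore : ∀ a : Fin n → ℝ, |a ⬝ᵥ d| ≤ calE CM γ a b := by
    intro a
    have hαd : a ⬝ᵥ d = (S *ᵥ a) ⬝ᵥ u := by
      rw [← hdu, dot_shift hSsym a u]
    have hball := ball_bound hγ u (S *ᵥ a) βv hball_pre
    have hSS : ∀ v w : Fin n → ℝ, (S *ᵥ v) ⬝ᵥ (S *ᵥ w) = v ⬝ᵥ (CM⁻¹ *ᵥ w) := by
      intro v w
      rw [dot_shift hSsym v (S *ᵥ w), mulVec_mulVec, hSsq]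
    rw [calE, hαd]
    rw [← hSS a b, ← hSS a a, ← hSS b b]
    exact hball
  -- score decomposition
  have hk : k = m + ζ := by rw [hζdef]; funext i; simp
  have hsc : score lam y k cG - score lam y m cM =
      (1/(lam*(n:ℝ))) * (ζ ⬝ᵥ (Y *ᵥ cM)) + am ⬝ᵥ d + aζ ⬝ᵥ d := by
    rw [score, score, hyc cG, hyc cM, hamdef, haζdef, hk, hcGd]
    rw [mulVec_add, dotProduct_add, add_dotProduct]
    rw [smul_dotProduct, smul_dotProduct]
    rw [dot_shift hYsym m d, dot_shift hYsym ζ d]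
    simp only [smul_eq_mul]
    rw [add_dotProduct]
    ring
  rw [hsc]
  have h1 := hcore am
  have h2 := hcore aζ
  have habs : |(1/(lam*(n:ℝ))) * (ζ ⬝ᵥ (Y *ᵥ cM)) + am ⬝ᵥ d + aζ ⬝ᵥ d| ≤
      |(1/(lam*(n:ℝ))) * (ζ ⬝ᵥ (Y *ᵥ cM))| + |am ⬝ᵥ d| + |aζ ⬝ᵥ d| := by
    calc |(1/(lam*(n:ℝ))) * (ζ ⬝ᵥ (Y *ᵥ cM)) + am ⬝ᵥ d + aζ ⬝ᵥ d|
        ≤ |(1/(lam*(n:ℝ))) * (ζ ⬝ᵥ (Y *ᵥ cM)) + am ⬝ᵥ d| + |aζ ⬝ᵥ d| := abs_add_le _ _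
      _ ≤ |(1/(lam*(n:ℝ))) * (ζ ⬝ᵥ (Y *ᵥ cM))| + |am ⬝ᵥ d| + |aζ ⬝ᵥ d| := by
          linarith [abs_add_le ((1/(lam*(n:ℝ))) * (ζ ⬝ᵥ (Y *ᵥ cM))) (am ⬝ᵥ d)]
  have hcoef : |(1/(lam*(n:ℝ))) * (ζ ⬝ᵥ (Y *ᵥ cM))| =
      (1/(lam*(n:ℝ))) * |ζ ⬝ᵥ (Y *ᵥ cM)| := by
    rw [abs_mul, abs_of_pos (by positivity : (0:ℝ) < 1/(lam*(n:ℝ)))]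
  rw [hcoef] at habs
  linarith
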